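/- Let T be a subset of Fin (n+1) with σ·T = T, and suppose that T ∩ E = ∅ or E ⊆ T. Then {T' ∈ O(T) | σ·T' = T'} = {T, τ·T}; moreover τ′·T = T and τ′·(τ·T) = τ·T. In particular the set of σ-invariant elements of O(T), as well as its quotient by the action of τ′, has exactly one element if τ·T = T and exactly two elements otherwise. -/

import Mathlib

open Fin.NatCast

/-- Vertices of the affine Dynkin diagram of type `D_n` are identified with
`Fin (n+1) = {0, 1, …, n}`. `sigmaD n` is the transposition exchanging `n-1` and `n`
(the unramified Galois involution). -/
def sigmaD (n : ℕ) : Fin (n + 1) → Fin (n + 1) := fun i =>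
  if (i : ℕ) = n - 1 then (↑n : Fin (n + 1))
  else if (i : ℕ) = n then (↑(n - 1) : Fin (n + 1))
  else i

/-- `tauPrimeD n` exchanges `0` with `1` and `n-1` with `n`, fixing all other vertices
(the generator of `Ξ`). -/
def tauPrimeD (n : ℕ) : Fin (n + 1) → Fin (n + 1) := fun i =>
  if (i : ℕ) = 0 then (↑(1 : ℕ) : Fin (n + 1))
  else if (i : ℕ) = 1 then (↑(0 : ℕ) : Fin (n + 1))
  else if (i : ℕ) = n - 1 then (↑n : Fin (n + 1))
  else if (i : ℕ) = n then (↑(n - 1) : Fin (n + 1))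
  else i

/-- `tauD n` is the involution with `τ(0) = n-1`, `τ(1) = n`, `τ(n-1) = 0`, `τ(n) = 1` and
`τ(i) = n - i` for `2 ≤ i ≤ n-2`. -/
def tauD (n : ℕ) : Fin (n + 1) → Fin (n + 1) := fun i =>
  if (i : ℕ) = 0 then (↑(n - 1) : Fin (n + 1))
  else if (i : ℕ) = 1 then (↑n : Fin (n + 1))
  else if (i : ℕ) = n - 1 then (↑(0 : ℕ) : Fin (n + 1))
  else if (i : ℕ) = n then (↑(1 : ℕ) : Fin (n + 1))
  else (↑(n - (i : ℕ)) : Fin (n + 1))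

section Aux
variable (n : ℕ)

lemma val_sigmaD (hn : 4 ≤ n) (i : Fin (n + 1)) :
    ((sigmaD n i : Fin (n + 1)) : ℕ) =
      if (i : ℕ) = n - 1 then n else if (i : ℕ) = n then n - 1 else (i : ℕ) := by
  have hc : ∀ k, k ≤ n → ((↑k : Fin (n + 1)) : ℕ) = k :=
    fun k hk => Fin.val_cast_of_lt (by omega)
  simp only [sigmaD, apply_ite (Fin.val), hc n le_rfl, hc (n - 1) (by omega)]

lemma val_tauPrimeD (hn : 4 ≤ n) (i : Fin (n + 1)) :
    ((tauPrimeD n i : Fin (n + 1)) : ℕ) =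
      if (i : ℕ) = 0 then 1 else if (i : ℕ) = 1 then 0
      else if (i : ℕ) = n - 1 then n else if (i : ℕ) = n then n - 1 else (i : ℕ) := by
  have hc : ∀ k, k ≤ n → ((↑k : Fin (n + 1)) : ℕ) = k :=
    fun k hk => Fin.val_cast_of_lt (by omega)
  simp only [tauPrimeD, apply_ite (Fin.val), hc 0 (by omega), hc 1 (by omega),
    hc n le_rfl, hc (n - 1) (by omega)]

lemma val_tauD (hn : 4 ≤ n) (i : Fin (n + 1)) :
    ((tauD n i : Fin (n + 1)) : ℕ) =
      if (i : ℕ) = 0 then n - 1 else if (i : ℕ) = 1 then n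
      else if (i : ℕ) = n - 1 then 0 else if (i : ℕ) = n then 1 else n - (i : ℕ) := by
  have hc : ∀ k, k ≤ n → ((↑k : Fin (n + 1)) : ℕ) = k :=
    fun k hk => Fin.val_cast_of_lt (by omega)
  simp only [tauD, apply_ite (Fin.val), hc 0 (by omega), hc 1 (by omega),
    hc n le_rfl, hc (n - 1) (by omega), hc (n - (i : ℕ)) (by omega)]

variable {n}

-- evaluation lemmas for sigmaD
lemma sig_fix (hn : 4 ≤ n) (i : Fin (n + 1)) (h1 : (i : ℕ) ≠ n - 1) (h2 : (i : ℕ) ≠ n) :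
    ((sigmaD n i : Fin (n + 1)) : ℕ) = (i : ℕ) := by
  rw [val_sigmaD n hn, if_neg h1, if_neg h2]

lemma sigN1 (hn : 4 ≤ n) (i : Fin (n + 1)) (h : (i : ℕ) = n - 1) :
    ((sigmaD n i : Fin (n + 1)) : ℕ) = n := by
  rw [val_sigmaD n hn, if_pos h]

lemma sigN (hn : 4 ≤ n) (i : Fin (n + 1)) (h : (i : ℕ) = n) :
    ((sigmaD n i : Fin (n + 1)) : ℕ) = n - 1 := by
  rw [val_sigmaD n hn, if_neg (by omega), if_pos h]

-- evaluation lemmas for tauPrimeD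
lemma tp0 (hn : 4 ≤ n) (i : Fin (n + 1)) (h : (i : ℕ) = 0) :
    ((tauPrimeD n i : Fin (n + 1)) : ℕ) = 1 := by
  rw [val_tauPrimeD n hn, if_pos h]

lemma tp1 (hn : 4 ≤ n) (i : Fin (n + 1)) (h : (i : ℕ) = 1) :
    ((tauPrimeD n i : Fin (n + 1)) : ℕ) = 0 := by
  rw [val_tauPrimeD n hn, if_neg (by omega), if_pos h]

lemma tpN1 (hn : 4 ≤ n) (i : Fin (n + 1)) (h : (i : ℕ) = n - 1) :
    ((tauPrimeD n i : Fin (n + 1)) : ℕ) = n := by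
  rw [val_tauPrimeD n hn, if_neg (by omega), if_neg (by omega), if_pos h]

lemma tpN (hn : 4 ≤ n) (i : Fin (n + 1)) (h : (i : ℕ) = n) :
    ((tauPrimeD n i : Fin (n + 1)) : ℕ) = n - 1 := by
  rw [val_tauPrimeD n hn, if_neg (by omega), if_neg (by omega), if_neg (by omega), if_pos h]

lemma tp_fix (hn : 4 ≤ n) (i : Fin (n + 1)) (h2 : 2 ≤ (i : ℕ)) (h3 : (i : ℕ) ≤ n - 2) :
    ((tauPrimeD n i : Fin (n + 1)) : ℕ) = (i : ℕ) := by
  rw [val_tauPrimeD n hn, if_neg (by omega), if_neg (by omega), if_neg (by omega),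
    if_neg (by omega)]

-- evaluation lemmas for tauD
lemma tau0 (hn : 4 ≤ n) (i : Fin (n + 1)) (h : (i : ℕ) = 0) :
    ((tauD n i : Fin (n + 1)) : ℕ) = n - 1 := by
  rw [val_tauD n hn, if_pos h]

lemma tau1 (hn : 4 ≤ n) (i : Fin (n + 1)) (h : (i : ℕ) = 1) :
    ((tauD n i : Fin (n + 1)) : ℕ) = n := by
  rw [val_tauD n hn, if_neg (by omega), if_pos h]

lemma tauN1 (hn : 4 ≤ n) (i : Fin (n + 1)) (h : (i : ℕ) = n - 1) :
    ((tauD n i : Fin (n + 1)) : ℕ) = 0 := by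
  rw [val_tauD n hn, if_neg (by omega), if_neg (by omega), if_pos h]

lemma tauN (hn : 4 ≤ n) (i : Fin (n + 1)) (h : (i : ℕ) = n) :
    ((tauD n i : Fin (n + 1)) : ℕ) = 1 := by
  rw [val_tauD n hn, if_neg (by omega), if_neg (by omega), if_neg (by omega), if_pos h]

lemma tauMid (hn : 4 ≤ n) (i : Fin (n + 1)) (h2 : 2 ≤ (i : ℕ)) (h3 : (i : ℕ) ≤ n - 2) :
    ((tauD n i : Fin (n + 1)) : ℕ) = n - (i : ℕ) := by
  rw [val_tauD n hn, if_neg (by omega), if_neg (by omega), if_neg (by omega), if_neg (by omega)]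

lemma lemB (hn : 4 ≤ n) : sigmaD n ∘ tauD n = tauD n ∘ tauPrimeD n ∘ sigmaD n := by
  funext i
  have hi : (i : ℕ) < n + 1 := i.isLt
  apply Fin.ext
  show ((sigmaD n (tauD n i) : Fin (n + 1)) : ℕ)
      = ((tauD n (tauPrimeD n (sigmaD n i)) : Fin (n + 1)) : ℕ)
  have h5 : (i : ℕ) = 0 ∨ (i : ℕ) = 1 ∨ (i : ℕ) = n - 1 ∨ (i : ℕ) = n ∨
      (2 ≤ (i : ℕ) ∧ (i : ℕ) ≤ n - 2) := by omega
  rcases h5 with h | h | h | h | ⟨h2, h3⟩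
  · have b1 := tau0 hn i h
    have b2 := sigN1 hn _ b1
    have a1 := sig_fix hn i (by omega) (by omega)
    have a2 := tp0 hn _ (a1.trans h)
    have a3 := tau1 hn _ a2
    omega
  · have b1 := tau1 hn i h
    have b2 := sigN hn _ b1
    have a1 := sig_fix hn i (by omega) (by omega)
    have a2 := tp1 hn _ (a1.trans h)
    have a3 := tau0 hn _ a2
    omega
  · have b1 := tauN1 hn i h
    have b2 := sig_fix hn (tauD n i) (by omega) (by omega)
    have a1 := sigN1 hn i h
    have a2 := tpN hn _ a1
    have a3 := tauN1 hn _ a2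
    omega
  · have b1 := tauN hn i h
    have b2 := sig_fix hn (tauD n i) (by omega) (by omega)
    have a1 := sigN hn i h
    have a2 := tpN1 hn _ a1
    have a3 := tauN hn _ a2
    omega
  · have b1 := tauMid hn i h2 h3
    have b2 := sig_fix hn (tauD n i) (by omega) (by omega)
    have a1 := sig_fix hn i (by omega) (by omega)
    have a2 := tp_fix hn (sigmaD n i) (by omega) (by omega)
    have a3 := tauMid hn (tauPrimeD n (sigmaD n i)) (by omega) (by omega)
    omega

lemma lemC (hn : 4 ≤ n) : tauD n ∘ tauPrimeD n = tauPrimeD n ∘ tauD n := by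
  funext i
  have hi : (i : ℕ) < n + 1 := i.isLt
  apply Fin.ext
  show ((tauD n (tauPrimeD n i) : Fin (n + 1)) : ℕ)
      = ((tauPrimeD n (tauD n i) : Fin (n + 1)) : ℕ)
  have h5 : (i : ℕ) = 0 ∨ (i : ℕ) = 1 ∨ (i : ℕ) = n - 1 ∨ (i : ℕ) = n ∨
      (2 ≤ (i : ℕ) ∧ (i : ℕ) ≤ n - 2) := by omega
  rcases h5 with h | h | h | h | ⟨h2, h3⟩
  · have a1 := tp0 hn i h
    have a2 := tau1 hn _ a1
    have b1 := tau0 hn i h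
    have b2 := tpN1 hn _ b1
    omega
  · have a1 := tp1 hn i h
    have a2 := tau0 hn _ a1
    have b1 := tau1 hn i h
    have b2 := tpN hn _ b1
    omega
  · have a1 := tpN1 hn i h
    have a2 := tauN hn _ a1
    have b1 := tauN1 hn i h
    have b2 := tp0 hn _ b1
    omega
  · have a1 := tpN hn i h
    have a2 := tauN1 hn _ a1
    have b1 := tauN hn i h
    have b2 := tp1 hn _ b1
    omega
  · have a1 := tp_fix hn i h2 h3
    have a2 := tauMid hn (tauPrimeD n i) (by omega) (by omega)
    have b1 := tauMid hn i h2 h3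
    have b2 := tp_fix hn (tauD n i) (by omega) (by omega)
    omega

lemma lemInv (hn : 4 ≤ n) (i : Fin (n + 1)) : tauPrimeD n (tauPrimeD n i) = i := by
  have hi : (i : ℕ) < n + 1 := i.isLt
  apply Fin.ext
  have h5 : (i : ℕ) = 0 ∨ (i : ℕ) = 1 ∨ (i : ℕ) = n - 1 ∨ (i : ℕ) = n ∨
      (2 ≤ (i : ℕ) ∧ (i : ℕ) ≤ n - 2) := by omega
  rcases h5 with h | h | h | h | ⟨h2, h3⟩
  · have a1 := tp0 hn i h
    have a2 := tp1 hn _ a1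
    omega
  · have a1 := tp1 hn i h
    have a2 := tp0 hn _ a1
    omega
  · have a1 := tpN1 hn i h
    have a2 := tpN hn _ a1
    omega
  · have a1 := tpN hn i h
    have a2 := tpN1 hn _ a1
    omega
  · have a1 := tp_fix hn i h2 h3
    have a2 := tp_fix hn (tauPrimeD n i) (by omega) (by omega)
    omega

end Aux

/-- The extremal vertices `{0, 1, n-1, n}` of the affine Dynkin diagram of type `D_n`. -/
def extremalD (n : ℕ) : Set (Fin (n + 1)) :=
  {(↑(0 : ℕ) : Fin (n + 1)), (↑(1 : ℕ) : Fin (n + 1)), (↑(n - 1) : Fin (n + 1)),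
    (↑n : Fin (n + 1))}

/-- The orbit `O(T) = {T, τ·T, τ′·T, (τ∘τ′)·T}` of a type `T` under the Klein four-group
`{id, τ, τ′, τ∘τ′}` (realizing `Ξ^nr`), acting on subsets by images. -/
def orbD (n : ℕ) (T : Set (Fin (n + 1))) : Set (Set (Fin (n + 1))) :=
  {T, tauD n '' T, tauPrimeD n '' T, (tauD n ∘ tauPrimeD n) '' T}

/-- Type `²D_n` (`n ≥ 4`): if `T` is a `σ`-invariant type with `T ∩ E = ∅` or `E ⊆ T`
(where `E` is the set of extremal vertices), then the `σ`-invariant elements of the orbit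
`O(T)` are exactly `{T, τ·T}`, and both are fixed by `τ′`. In particular the set of
`σ`-invariant elements of `O(T)` (as well as its quotient by `τ′`) has exactly one element
if `τ·T = T` and exactly two elements otherwise. -/
theorem stmt10 (n : ℕ) (hn : 4 ≤ n) (T : Set (Fin (n + 1)))
    (hσ : sigmaD n '' T = T)
    (hE : T ∩ extremalD n = ∅ ∨ extremalD n ⊆ T) :
    {T' ∈ orbD n T | sigmaD n '' T' = T'} = {T, tauD n '' T} ∧
    tauPrimeD n '' T = T ∧
    tauPrimeD n '' (tauD n '' T) = tauD n '' T ∧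
    (tauD n '' T = T → {T' ∈ orbD n T | sigmaD n '' T' = T'} = {T}) ∧
    (tauD n '' T ≠ T → {T' ∈ orbD n T | sigmaD n '' T' = T'}.ncard = 2) := by
  -- membership in extremalD from val facts
  have hc : ∀ k, k ≤ n → ((↑k : Fin (n + 1)) : ℕ) = k :=
    fun k hk => Fin.val_cast_of_lt (by omega)
  have hEmem : ∀ j : Fin (n + 1),
      ((j : ℕ) = 0 ∨ (j : ℕ) = 1 ∨ (j : ℕ) = n - 1 ∨ (j : ℕ) = n) → j ∈ extremalD n := by
    intro j hj
    simp only [extremalD, Set.mem_insert_iff, Set.mem_singleton_iff]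
    rcases hj with h | h | h | h
    · exact Or.inl (Fin.ext (by rw [hc 0 (by omega)]; omega))
    · exact Or.inr (Or.inl (Fin.ext (by rw [hc 1 (by omega)]; omega)))
    · exact Or.inr (Or.inr (Or.inl (Fin.ext (by rw [hc (n - 1) (by omega)]; omega))))
    · exact Or.inr (Or.inr (Or.inr (Fin.ext (by rw [hc n le_rfl]; omega))))
  -- tauPrimeD maps T into T
  have hA : ∀ i ∈ T, tauPrimeD n i ∈ T := by
    intro i hiT
    by_cases hext : (i : ℕ) = 0 ∨ (i : ℕ) = 1 ∨ (i : ℕ) = n - 1 ∨ (i : ℕ) = n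
    · rcases hE with hE | hE
      · exact absurd ⟨hiT, hEmem i hext⟩ (Set.eq_empty_iff_forall_notMem.mp hE i)
      · apply hE
        apply hEmem
        have hi : (i : ℕ) < n + 1 := i.isLt
        rcases hext with h | h | h | h
        · exact Or.inr (Or.inl (tp0 hn i h))
        · exact Or.inl (tp1 hn i h)
        · exact Or.inr (Or.inr (Or.inr (tpN1 hn i h)))
        · exact Or.inr (Or.inr (Or.inl (tpN hn i h)))
    · have hi : (i : ℕ) < n + 1 := i.isLt
      have : tauPrimeD n i = i :=
        Fin.ext (tp_fix hn i (by omega) (by omega))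
      rwa [this]
  have hτ' : tauPrimeD n '' T = T := by
    apply Set.Subset.antisymm
    · rintro _ ⟨i, hi, rfl⟩; exact hA i hi
    · intro i hi; exact ⟨tauPrimeD n i, hA i hi, lemInv hn i⟩
  have hστ : sigmaD n '' (tauD n '' T) = tauD n '' T := by
    rw [← Set.image_comp, lemB hn, Set.image_comp, Set.image_comp, hσ, hτ']
  have hττ' : tauPrimeD n '' (tauD n '' T) = tauD n '' T := by
    rw [← Set.image_comp, ← lemC hn, Set.image_comp, hτ']
  have horb : orbD n T = {T, tauD n '' T} := by
    rw [orbD, Set.image_comp, hτ']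
    ext S
    simp only [Set.mem_insert_iff, Set.mem_singleton_iff]
    tauto
  have hset : {T' ∈ orbD n T | sigmaD n '' T' = T'} = {T, tauD n '' T} := by
    rw [horb]
    ext S
    simp only [Set.mem_setOf_eq, Set.mem_insert_iff, Set.mem_singleton_iff]
    constructor
    · exact fun h => h.1
    · rintro (rfl | rfl)
      exacts [⟨Or.inl rfl, hσ⟩, ⟨Or.inr rfl, hστ⟩]
  refine ⟨hset, hτ', hττ', ?_, ?_⟩
  · intro h
    rw [hset, h]
    simp
  · intro h
    rw [hset]
    exact Set.ncard_pair (Ne.symm h)
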